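/- arXiv:2404.06624 — 3 statements merged into one kernel-verified Lean document; each statement's English description precedes it below -/
import Mathlib

section
/- If the argmax ℓ_t in the definition of Ω_t := max_{0 ≤ k ≤ min(t,W-1)} ∑_{i=1}^k (c_{t-i} - ρC̄) satisfies ℓ_t < W-1, then Ω_{t+1} = max(Ω_t + c_t - ρC̄, 0). -/
/-- Ω_t^n := max_{0 ≤ k ≤ n} ∑_{i=1}^k (c_{t-i} - ρ·C̄), empty sum = 0. -/
noncomputable def Omega (c : ℕ → ℝ) (ρ Cb : ℝ) (t n : ℕ) : ℝ :=
  (Finset.range (n + 1)).sup' (Finset.nonempty_range_iff.mpr (Nat.succ_ne_zero n))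
    (fun k => ∑ i ∈ Finset.Icc 1 k, (c (t - i) - ρ * Cb))

lemma omega_le (c : ℕ → ℝ) (ρ Cb : ℝ) (t k n : ℕ) (h : k ≤ n) :
    (∑ i ∈ Finset.Icc 1 k, (c (t - i) - ρ * Cb)) ≤ Omega c ρ Cb t n := by
  unfold Omega
  exact Finset.le_sup' (fun k => ∑ i ∈ Finset.Icc 1 k, (c (t - i) - ρ * Cb))
    (Finset.mem_range.mpr (Nat.lt_succ_of_le h))

lemma omega_sup_le (c : ℕ → ℝ) (ρ Cb : ℝ) (t n : ℕ) (x : ℝ)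
    (h : ∀ k ≤ n, (∑ i ∈ Finset.Icc 1 k, (c (t - i) - ρ * Cb)) ≤ x) :
    Omega c ρ Cb t n ≤ x := by
  unfold Omega
  apply Finset.sup'_le
  intro k hk
  exact h k (by simpa [Nat.lt_succ_iff] using Finset.mem_range.mp hk)

lemma omega_succ (c : ℕ → ℝ) (ρ Cb : ℝ) (t n : ℕ) :
    Omega c ρ Cb t (n + 1) =
      max (Omega c ρ Cb t n) (∑ i ∈ Finset.Icc 1 (n+1), (c (t - i) - ρ * Cb)) := by
  apply le_antisymm
  · apply omega_sup_le
    intro k hk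
    rcases Nat.lt_or_ge k (n+1) with h | h
    · exact le_max_of_le_left (omega_le _ _ _ _ _ _ (by omega))
    · have : k = n + 1 := by omega
      subst this; exact le_max_right _ _
  · apply max_le
    · apply omega_sup_le
      intro k hk
      exact omega_le _ _ _ _ _ _ (by omega)
    · exact omega_le _ _ _ _ _ _ le_rfl

lemma omega_zero (c : ℕ → ℝ) (ρ Cb : ℝ) (t : ℕ) : Omega c ρ Cb t 0 = 0 := by
  simp [Omega]

lemma sum_shift (c : ℕ → ℝ) (d : ℝ) (t k : ℕ) :
    ∑ i ∈ Finset.Icc 1 (k+1), (c (t + 1 - i) - d)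
      = (c t - d) + ∑ i ∈ Finset.Icc 1 k, (c (t - i) - d) := by
  have h1 : ∀ (m : ℕ) (f : ℕ → ℝ), ∑ i ∈ Finset.Icc 1 m, f i = ∑ i ∈ Finset.range m, f (1 + i) := by
    intro m f
    rw [← Finset.Ico_add_one_right_eq_Icc, Finset.sum_Ico_eq_sum_range]
    simp
  rw [h1, h1, Finset.sum_range_succ']
  have e1 : ∀ i : ℕ, t + 1 - (1 + (i + 1)) = t - (1 + i) := by intro i; omega
  have e2 : t + 1 - (1 + 0) = t := by omega
  simp only [e1, e2]
  exact add_comm _ _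

lemma omega_rec (c : ℕ → ℝ) (ρ Cb : ℝ) (t n : ℕ) :
    Omega c ρ Cb (t + 1) (n + 1) = max 0 ((c t - ρ * Cb) + Omega c ρ Cb t n) := by
  induction n with
  | zero =>
      rw [omega_succ, omega_zero, omega_zero, sum_shift]
      simp
  | succ n ih =>
      rw [omega_succ, ih, sum_shift, omega_succ]
      rw [max_assoc, max_add_add_left]

theorem stmt_1 (c : ℕ → ℝ) (ρ Cb : ℝ) (hρ : ρ ∈ Set.Icc (0:ℝ) 1) (hCb : 0 < Cb)
    (W : ℕ) (hW : 1 ≤ W) (t : ℕ) (ℓ : ℕ)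
    -- ℓ is an index achieving the maximum defining Ω_t := Ω_t^{min(t,W-1)}
    (hℓ_le : ℓ ≤ min t (W - 1))
    (hℓ_max : (∑ i ∈ Finset.Icc 1 ℓ, (c (t - i) - ρ * Cb)) = Omega c ρ Cb t (min t (W - 1)))
    (hℓ_lt : ℓ < W - 1) :
    Omega c ρ Cb (t + 1) (min (t + 1) (W - 1)) =
      max (Omega c ρ Cb t (min t (W - 1)) + c t - ρ * Cb) 0 := by
  have hW2 : 2 ≤ W := by omega
  have hmin : min (t + 1) (W - 1) = min t (W - 2) + 1 := by omega
  have heq : Omega c ρ Cb t (min t (W - 2)) = Omega c ρ Cb t (min t (W - 1)) := by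
    apply le_antisymm
    · apply omega_sup_le
      intro k hk
      exact omega_le c ρ Cb t k (min t (W - 1)) (by omega)
    · rw [← hℓ_max]
      exact omega_le c ρ Cb t ℓ (min t (W - 2)) (by omega)
  rw [hmin, omega_rec, heq, max_comm]
  congr 1
  ring
end

section
/- Under the sliding-window constraint ∑_{i=t-min(t,W-1)}^{t} c_i ≤ W·C̄ for all t, the virtual queue Q defined by Q_0 = 0 and Q_{t+1} = max(Q_t + c_t - C̄, 0) returns to zero within every window of W consecutive periods: for every interval of W successive periods there exists t in the interval with Q_t = 0. -/
theorem stmt_5 (c : ℕ → ℝ) (hc : ∀ t, 0 ≤ c t) (Cb : ℝ) (hCb : 0 < Cb)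
    (W : ℕ) (hW : 1 ≤ W)
    -- sliding-window constraint: average over the last min(t+1,W) periods ≤ C̄
    (hwin : ∀ t : ℕ, ∑ i ∈ Finset.Icc (t + 1 - W) t, c i ≤ W * Cb)
    (Q : ℕ → ℝ) (hQ0 : Q 0 = 0)
    (hQ : ∀ t : ℕ, Q (t + 1) = max (Q t + c t - Cb) 0) :
    ∀ t0 : ℕ, ∃ t : ℕ, t0 ≤ t ∧ t < t0 + W ∧ Q t = 0 := by
  classical
  have hQnn : ∀ t, 0 ≤ Q t := by
    intro t
    cases t with
    | zero => rw [hQ0]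
    | succ n => rw [hQ]; exact le_max_right _ _
  intro t0
  by_contra hcon
  push_neg at hcon
  set s := Nat.findGreatest (fun n => Q n = 0) t0 with hs
  have hsQ : Q s = 0 := Nat.findGreatest_spec (P := fun n => Q n = 0) (Nat.zero_le t0) hQ0
  have hsle : s ≤ t0 := Nat.findGreatest_le t0
  have hslt : s < t0 := by
    rcases lt_or_eq_of_le hsle with h | h
    · exact h
    · exact absurd hsQ (by rw [h]; exact hcon t0 le_rfl (by omega))
  have hpos : ∀ t, s < t → t < t0 + W → 0 < Q t := by
    intro t hst htW
    rcases le_or_gt t t0 with h | h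
    · have hne : ¬ Q t = 0 := Nat.findGreatest_is_greatest (P := fun n => Q n = 0) hst h
      exact lt_of_le_of_ne (hQnn t) (Ne.symm hne)
    · exact lt_of_le_of_ne (hQnn t) (Ne.symm (hcon t h.le htW))
  have htel : ∀ k, k ≤ W → Q (s + k) = (∑ i ∈ Finset.range k, c (s + i)) - k * Cb := by
    intro k hk
    induction k with
    | zero => simpa using hsQ
    | succ n ih =>
      have ihn := ih (by omega)
      have hp : 0 < Q (s + n + 1) := hpos (s + n + 1) (by omega) (by omega)
      rw [hQ (s + n)] at hp
      have hx : 0 < Q (s + n) + c (s + n) - Cb := by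
        by_contra h
        push_neg at h
        rw [max_eq_right h] at hp
        exact lt_irrefl _ hp
      have : Q (s + (n + 1)) = Q (s + n) + c (s + n) - Cb := by
        rw [show s + (n + 1) = s + n + 1 from rfl, hQ (s + n), max_eq_left hx.le]
      rw [this, ihn, Finset.sum_range_succ]
      push_cast
      ring
  have hQW := htel W le_rfl
  have hposW : 0 < Q (s + W) := hpos _ (by omega) (by omega)
  have hsum : (W : ℝ) * Cb < ∑ i ∈ Finset.range W, c (s + i) := by
    rw [hQW] at hposW; linarith
  have hw := hwin (s + W - 1)
  have h1 : s + W - 1 + 1 - W = s := by omega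
  have heq : Finset.Icc s (s + W - 1) = Finset.Ico s (s + W) := by
    rw [← Finset.Ico_add_one_right_eq_Icc]
    congr 1
    omega
  rw [h1, heq, Finset.sum_Ico_eq_sum_range, show s + W - s = W by omega] at hw
  linarith
end

section
/- Boundedness of the virtual queue under the EMF constraint: if the sliding-window constraint (1/W)∑_{i=max(t-W+1,0)}^{t} c_i ≤ C̄ holds for all t and 0 ≤ c_t ≤ C_max, then the queue Q with Q_0 = 0 and Q_{t+1} = max(Q_t + c_t − C̄, 0) satisfies Q_t ≤ (W−1)(C_max − C̄) for all t (assuming C_max ≥ C̄). -/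
theorem stmt_17 (c : ℕ → ℝ) (Cb Cmax : ℝ) (hCb : 0 < Cb) (hCmax : Cb ≤ Cmax)
    (hc : ∀ t, 0 ≤ c t ∧ c t ≤ Cmax)
    (W : ℕ) (hW : 1 ≤ W)
    (hwin : ∀ t : ℕ, ∑ i ∈ Finset.Icc (t + 1 - W) t, c i ≤ W * Cb)
    (Q : ℕ → ℝ) (hQ0 : Q 0 = 0)
    (hQ : ∀ t : ℕ, Q (t + 1) = max (Q t + c t - Cb) 0) :
    ∀ t : ℕ, Q t ≤ (W - 1 : ℕ) * (Cmax - Cb) := by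
  have hd : (0 : ℝ) ≤ Cmax - Cb := by linarith
  suffices h : ∀ t : ℕ, ∃ s, s ≤ t ∧ t - s ≤ W - 1 ∧
      Q t ≤ ∑ i ∈ Finset.Ico s t, (c i - Cb) ∧
      Q t ≤ ((t - s : ℕ) : ℝ) * (Cmax - Cb) by
    intro t
    obtain ⟨s, hst, hsW, _, hQb⟩ := h t
    calc Q t ≤ ((t - s : ℕ) : ℝ) * (Cmax - Cb) := hQb
      _ ≤ ((W - 1 : ℕ) : ℝ) * (Cmax - Cb) := by
          exact mul_le_mul_of_nonneg_right (by exact_mod_cast hsW) hd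
  intro t
  induction t with
  | zero => exact ⟨0, le_rfl, by simp, by simp [hQ0], by simp [hQ0]⟩
  | succ t ih =>
    obtain ⟨s, hst, hsW, hsum, hbound⟩ := ih
    by_cases hpos : Q t + c t - Cb ≤ 0
    · refine ⟨t + 1, le_rfl, by simp, ?_, ?_⟩ <;>
        simp [hQ t, max_eq_right hpos]
    · push_neg at hpos
      have hQt1 : Q (t + 1) = Q t + c t - Cb := by
        rw [hQ t]; exact max_eq_left hpos.le
      have hct := hc t
      have hsum' : Q (t + 1) ≤ ∑ i ∈ Finset.Ico s (t + 1), (c i - Cb) := by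
        rw [Finset.sum_Ico_succ_top (by omega : s ≤ t), hQt1]
        linarith
      have hsW' : t + 1 - s ≤ W - 1 := by
        rcases lt_or_eq_of_le hsW with hlt | heq
        · omega
        · exfalso
          have hswin : s = t + 1 - W := by omega
          have hle : ∑ i ∈ Finset.Ico s (t + 1), (c i - Cb) ≤ 0 := by
            rw [Finset.sum_sub_distrib, Finset.Ico_add_one_right_eq_Icc, Finset.sum_const,
              Nat.card_Icc]
            have hcard : t + 1 - s = W := by omega
            rw [hcard, hswin]
            have := hwin t
            simp only [nsmul_eq_mul]
            linarith
          linarith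
      refine ⟨s, by omega, hsW', hsum', ?_⟩
      have hcast : ((t + 1 - s : ℕ) : ℝ) = ((t - s : ℕ) : ℝ) + 1 := by
        have : t + 1 - s = (t - s) + 1 := by omega
        rw [this]; push_cast; ring
      rw [hcast, hQt1]
      nlinarith [hct.2]
end
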